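/- Let n ≥ 2 and let H be a real symmetric n×n matrix with eigenvalues λ₁ ≤ λ₂ ≤ … ≤ λₙ (listed with multiplicity), and let λ̄ = (λ₁ + … + λₙ)/n be their mean. Then ∑ᵢ (λᵢ - λ̄)² ≥ ((n-1)/n)·(λ₂ - λ₁)². Equivalently, the trace-free part H₀ = H - λ̄·I satisfies |H₀|² ≥ ((n-1)/n)·(λ₂ - λ₁)², where |H₀|² is the squared Frobenius norm. -/

import Mathlib

/-- if `H` is a real symmetric `n×n` matrix (`n ≥ 2`) whose eigenvalues,
listed with multiplicity in increasing order, are `λ₁ ≤ λ₂ ≤ … ≤ λₙ`, and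
`λ̄ = (λ₁ + … + λₙ)/n` is their mean, then `∑ᵢ (λᵢ - λ̄)² ≥ ((n-1)/n)(λ₂ - λ₁)²`. -/
theorem stmt_8 (n : ℕ) (hn : 2 ≤ n) (H : Matrix (Fin n) (Fin n) ℝ)
    (hH : H.IsHermitian) (lam : Fin n → ℝ) (hmono : Monotone lam)
    (heig : ∃ σ : Equiv.Perm (Fin n), lam = hH.eigenvalues ∘ σ) :
    ((n : ℝ) - 1) / n * (lam ⟨1, by omega⟩ - lam ⟨0, by omega⟩) ^ 2 ≤
      ∑ i, (lam i - (∑ j, lam j) / n) ^ 2 := by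
  have hN : (2:ℝ) ≤ (n:ℝ) := by exact_mod_cast hn
  set N : ℝ := (n:ℝ) with hNdef
  set m : ℝ := (∑ j, lam j) / n with hm
  set x : Fin n → ℝ := fun i => lam i - m with hx
  set i0 : Fin n := ⟨0, by omega⟩
  set i1 : Fin n := ⟨1, by omega⟩
  have hNne : N ≠ 0 := by linarith
  have hsum0 : ∑ i, x i = 0 := by
    simp only [hx, Finset.sum_sub_distrib, Finset.sum_const, Finset.card_univ,
      Fintype.card_fin, nsmul_eq_mul, hm]
    field_simp
    ring
  set s : Finset (Fin n) := Finset.univ.erase i0 with hs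
  have hcard : (s.card : ℝ) = N - 1 := by
    rw [hs, Finset.card_erase_of_mem (Finset.mem_univ _), Finset.card_univ,
      Fintype.card_fin, Nat.cast_sub (by omega : 1 ≤ n)]
    simp [hNdef]
  have hsplit : x i0 + ∑ i ∈ s, x i = ∑ i, x i := by
    exact Finset.add_sum_erase _ x (Finset.mem_univ i0)
  have hA : ∑ i ∈ s, x i = - x i0 := by linarith [hsplit, hsum0]
  set d : ℝ := lam i1 - lam i0 with hd
  have hd0 : 0 ≤ d := by
    have := hmono (show i0 ≤ i1 by simp [i0, i1, Fin.le_def])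
    simp [hd]; linarith
  -- each i ∈ s satisfies d ≤ x i - x i0
  have hterm : ∀ i ∈ s, d ≤ x i - x i0 := by
    intro i hi
    have hi0 : i ≠ i0 := (Finset.mem_erase.mp hi).1
    have h1le : i1 ≤ i := by
      simp only [Fin.le_def, i1]
      have : i.val ≠ 0 := fun h => hi0 (Fin.ext h)
      omega
    have := hmono h1le
    simp only [hx, hd]; linarith
  have hstep1 : (N - 1) * d ≤ - N * x i0 := by
    have h := Finset.sum_le_sum hterm
    rw [Finset.sum_const, nsmul_eq_mul] at h
    rw [Finset.sum_sub_distrib, hA, Finset.sum_const, nsmul_eq_mul, hcard] at h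
    linarith
  have hcs : (x i0) ^ 2 ≤ (N - 1) * ∑ i ∈ s, x i ^ 2 := by
    have h := sq_sum_le_card_mul_sum_sq (s := s) (f := x)
    rw [hA] at h
    calc (x i0)^2 = (- x i0)^2 := by ring
    _ ≤ (s.card : ℝ) * ∑ i ∈ s, x i ^ 2 := h
    _ = (N - 1) * ∑ i ∈ s, x i ^ 2 := by rw [hcard]
  have hsplit2 : ∑ i, x i ^ 2 = x i0 ^ 2 + ∑ i ∈ s, x i ^ 2 :=
    (Finset.add_sum_erase _ (fun i => x i ^ 2) (Finset.mem_univ i0)).symm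
  have hgoal : (N - 1) / N * d ^ 2 ≤ ∑ i, x i ^ 2 := by
    rw [hsplit2, div_mul_eq_mul_div, div_le_iff₀ (by linarith : (0:ℝ) < N)]
    have hsq : ((N - 1) * d) ^ 2 ≤ (- N * x i0) ^ 2 :=
      mul_self_le_mul_self (by nlinarith) hstep1 |>.trans_eq (by ring) |>.trans_eq' (by ring)
    nlinarith [hcs, hsq, sq_nonneg (x i0)]
  exact hgoal
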